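/- Let p ≥ 1, n ≥ 2, N ≥ 1, and u ∈ C³(Ω, ℝᴺ). Then on {∇u ≠ 0}: |div(|∇u|^{p−2}∇u)|² ≥ div[|∇u|^{2(p−2)}((Δu)ᵀ∇u − (1/2)∇|∇u|²)] + κ_N(p) |∇u|^{2(p−2)} |∇²u|², where κ_N(p) is as defined: for N ≥ 2, κ_N(p) = 1 − (1/8)(4−p)² on [1,4/3), (p−1)² on [4/3,2), and 1 for p ≥ 2; for N = 1, κ_1(p) = (p−1)² on [1,2) and 1 for p ≥ 2. -/

import Mathlib

set_option maxHeartbeats 1000000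

noncomputable section

/-- Partial derivative of `f` at `x` in the `j`-th coordinate direction. -/
def pd {n : ℕ} (j : Fin n) (f : (Fin n → ℝ) → ℝ) (x : Fin n → ℝ) : ℝ :=
  fderiv ℝ f x (Pi.single j 1)

/-- The sharp constant `κ_N(p)`. -/
def kappa (N : ℕ) (p : ℝ) : ℝ :=
  if 2 ≤ p then 1
  else if N = 1 then (p - 1)^2
  else if p < 4/3 then 1 - (4 - p)^2 / 8
  else (p - 1)^2

open Filter Topology

section aux
variable {n : ℕ} {x : Fin n → ℝ}

lemma pd_congr {j : Fin n} {f h : (Fin n → ℝ) → ℝ} (hfh : f =ᶠ[nhds x] h) :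
    pd j f x = pd j h x := by unfold pd; rw [hfh.fderiv_eq]

lemma pd_sum {ι : Type*} (s : Finset ι) {f : ι → (Fin n → ℝ) → ℝ}
    (hf : ∀ i ∈ s, DifferentiableAt ℝ (f i) x) (j : Fin n) :
    pd j (fun y => ∑ i ∈ s, f i y) x = ∑ i ∈ s, pd j (f i) x := by
  unfold pd; rw [fderiv_fun_sum hf]; simp

lemma pd_mul {f g : (Fin n → ℝ) → ℝ} (hf : DifferentiableAt ℝ f x)
    (hg : DifferentiableAt ℝ g x) (j : Fin n) :
    pd j (fun y => f y * g y) x = pd j f x * g x + f x * pd j g x := by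
  unfold pd; rw [fderiv_fun_mul hf hg]; simp; ring

lemma pd_sub {f g : (Fin n → ℝ) → ℝ} (hf : DifferentiableAt ℝ f x)
    (hg : DifferentiableAt ℝ g x) (j : Fin n) :
    pd j (fun y => f y - g y) x = pd j f x - pd j g x := by
  unfold pd; rw [fderiv_fun_sub hf hg]; simp

lemma pd_const_mul {f : (Fin n → ℝ) → ℝ} (c : ℝ) (hf : DifferentiableAt ℝ f x) (j : Fin n) :
    pd j (fun y => c * f y) x = c * pd j f x := by
  unfold pd; rw [fderiv_const_mul hf]; simp

lemma pd_sq {f : (Fin n → ℝ) → ℝ} (hf : DifferentiableAt ℝ f x) (j : Fin n) :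
    pd j (fun y => f y ^ 2) x = 2 * f x * pd j f x := by
  have := pd_mul hf hf j
  have h2 : (fun y => f y ^ 2) = fun y => f y * f y := by funext y; ring
  rw [h2, this]; ring

lemma pd_rpow {f : (Fin n → ℝ) → ℝ} (c : ℝ) (hf : DifferentiableAt ℝ f x)
    (hfx : f x ≠ 0) (j : Fin n) :
    pd j (fun y => f y ^ c) x = c * f x ^ (c - 1) * pd j f x := by
  have h := (Real.hasDerivAt_rpow_const (p := c) (Or.inl hfx)).comp_hasFDerivAt x hf.hasFDerivAt
  have h' : HasFDerivAt (fun y => f y ^ c) ((c * f x ^ (c - 1)) • fderiv ℝ f x) x := h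
  unfold pd
  rw [h'.fderiv]
  simp [mul_comm]

lemma pd_sqrt {f : (Fin n → ℝ) → ℝ} (hf : DifferentiableAt ℝ f x)
    (hfx : f x ≠ 0) (j : Fin n) :
    pd j (fun y => Real.sqrt (f y)) x = pd j f x / (2 * Real.sqrt (f x)) := by
  have h := (Real.hasDerivAt_sqrt hfx).comp_hasFDerivAt x hf.hasFDerivAt
  have h' : HasFDerivAt (fun y => Real.sqrt (f y)) ((1 / (2 * Real.sqrt (f x))) • fderiv ℝ f x) x := h
  unfold pd
  rw [h'.fderiv]
  simp [div_eq_mul_inv, mul_comm]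

lemma clairaut {f : (Fin n → ℝ) → ℝ}
    (h1 : ∀ᶠ y in nhds x, DifferentiableAt ℝ f y)
    (h2 : DifferentiableAt ℝ (fderiv ℝ f) x) (j k : Fin n) :
    pd j (fun y => pd k f y) x = pd k (fun y => pd j f y) x := by
  have hs := second_derivative_symmetric_of_eventually
    (f := f) (f' := fderiv ℝ f) (f'' := fderiv ℝ (fderiv ℝ f) x)
    (h1.mono fun y hy => hy.hasFDerivAt) h2.hasFDerivAt
  unfold pd
  rw [fderiv_clm_apply h2 (differentiableAt_const _),
      fderiv_clm_apply h2 (differentiableAt_const _)]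
  simp [hs (Pi.single j 1) (Pi.single k 1)]
end aux


lemma sos_e1 {nn : ℕ} (M : Fin nn → Fin nn → ℝ) (hsym : ∀ j k, M j k = M k j)
    (a : Fin nn → ℝ) :
    2 * (∑ j, (a j)^2) * (∑ j, (∑ k, a k * M j k)^2)
      ≤ (∑ j, (a j)^2)^2 * (∑ j, ∑ k, (M j k)^2)
        + (∑ j, a j * ∑ k, a k * M j k)^2 := by
  set u : Fin nn → ℝ := fun j => ∑ k, a k * M j k with hu
  set A2 := ∑ j, (a j)^2 with hA2
  set U := ∑ j, (u j)^2 with hU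
  set t := ∑ j, a j * u j with ht
  set HH := ∑ j, ∑ k, (M j k)^2 with hHH
  have hA2nn : 0 ≤ A2 := Finset.sum_nonneg fun j _ => sq_nonneg _
  have hUnn : 0 ≤ U := Finset.sum_nonneg fun j _ => sq_nonneg _
  have hHHnn : 0 ≤ HH := Finset.sum_nonneg fun j _ =>
    Finset.sum_nonneg fun k _ => sq_nonneg _
  rcases eq_or_lt_of_le hA2nn with h0 | hA2pos
  · -- A2 = 0, so a = 0, u = 0, U = 0
    have ha : ∀ j, a j = 0 := by
      intro j
      have := (Finset.sum_eq_zero_iff_of_nonneg (fun i _ => sq_nonneg (a i))).1 h0.symm j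
        (Finset.mem_univ j)
      exact pow_eq_zero_iff (n := 2) (by norm_num) |>.1 this
    have hU0 : U = 0 := by
      rw [hU]; apply Finset.sum_eq_zero; intro j _
      rw [hu]
      simp [ha]
    rw [← h0, hU0]
    nlinarith [sq_nonneg t]
  · -- main case: SOS identity
    have hMau : ∑ j, ∑ k, M j k * (a j * u k) = U := by
      rw [Finset.sum_comm]
      have : ∀ k, ∑ j, M j k * (a j * u k) = u k * u k := by
        intro k
        have : ∑ j, M j k * (a j * u k) = (∑ j, a j * M k j) * u k := by
          rw [Finset.sum_mul]
          apply Finset.sum_congr rfl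
          intro j _
          rw [hsym j k]; ring
        rw [this, hu]
      rw [Finset.sum_congr rfl fun k _ => this k]
      rw [hU]; apply Finset.sum_congr rfl; intro j _; ring
    have hMua : ∑ j, ∑ k, M j k * (u j * a k) = U := by
      have : ∀ j, ∑ k, M j k * (u j * a k) = u j * u j := by
        intro j
        have : ∑ k, M j k * (u j * a k) = (∑ k, a k * M j k) * u j := by
          rw [Finset.sum_mul]
          apply Finset.sum_congr rfl
          intro k _; ring
        rw [this, hu]
      rw [Finset.sum_congr rfl fun j _ => this j]
      rw [hU]; apply Finset.sum_congr rfl; intro j _; ring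
    have hMaa : ∑ j, ∑ k, M j k * (a j * a k) = t := by
      have : ∀ j, ∑ k, M j k * (a j * a k) = a j * u j := by
        intro j
        rw [hu, Finset.mul_sum]
        apply Finset.sum_congr rfl
        intro k _; ring
      rw [Finset.sum_congr rfl fun j _ => this j, ht]
    -- pure product double sums
    have hprod : ∀ f g : Fin nn → ℝ,
        ∑ j, ∑ k, f j * g k = (∑ j, f j) * (∑ j, g j) := by
      intro f g
      rw [Finset.sum_mul_sum]
    have key : ∑ j, ∑ k,
        (A2^2 * M j k - A2*(a j * u k) - A2*(u j * a k) + t*(a j * a k))^2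
        = A2^2 * (A2^2*HH - 2*A2*U + t^2) := by
      have expand : ∀ j k,
          (A2^2 * M j k - A2*(a j * u k) - A2*(u j * a k) + t*(a j * a k))^2
          = A2^4*(M j k)^2
            + A2^2*((a j)^2 * (u k)^2) + A2^2*((u j)^2 * (a k)^2)
            + t^2*((a j)^2 * (a k)^2)
            - 2*A2^3*(M j k * (a j * u k)) - 2*A2^3*(M j k * (u j * a k))
            + 2*A2^2*t*(M j k * (a j * a k))
            + 2*A2^2*((a j * u j) * (u k * a k))
            - 2*A2*t*((a j)^2 * (u k * a k))
            - 2*A2*t*((u j * a j) * (a k)^2) := by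
        intro j k; ring
      calc ∑ j, ∑ k, (A2^2 * M j k - A2*(a j * u k) - A2*(u j * a k) + t*(a j * a k))^2
          = ∑ j, ∑ k, (A2^4*(M j k)^2
            + A2^2*((a j)^2 * (u k)^2) + A2^2*((u j)^2 * (a k)^2)
            + t^2*((a j)^2 * (a k)^2)
            - 2*A2^3*(M j k * (a j * u k)) - 2*A2^3*(M j k * (u j * a k))
            + 2*A2^2*t*(M j k * (a j * a k))
            + 2*A2^2*((a j * u j) * (u k * a k))
            - 2*A2*t*((a j)^2 * (u k * a k))
            - 2*A2*t*((u j * a j) * (a k)^2)) := by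
            exact Finset.sum_congr rfl fun j _ => Finset.sum_congr rfl fun k _ => expand j k
        _ = A2^2 * (A2^2*HH - 2*A2*U + t^2) := by
            simp only [Finset.sum_add_distrib, Finset.sum_sub_distrib,
              ← Finset.mul_sum, hMau, hMua, hMaa]
            simp only [← Finset.sum_mul]
            have e1 : ∑ j, u j * a j = t := by
              rw [ht]; exact Finset.sum_congr rfl fun j _ => mul_comm _ _
            have e2 : ∑ j, a j * a j = A2 := by
              rw [hA2]; exact Finset.sum_congr rfl fun j _ => (sq (a j)).symm
            have e3 : ∑ j, a j * u j = t := ht.symm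
            have e4 : (∑ j, (a j)^2) = A2 := hA2.symm
            have e5 : (∑ j, (u j)^2) = U := hU.symm
            have e6 : (∑ j, ∑ k, (M j k)^2) = HH := hHH.symm
            simp only [e1, e2, e3, e4, e5, e6]
            ring
    have hK : 0 ≤ ∑ j, ∑ k,
        (A2^2 * M j k - A2*(a j * u k) - A2*(u j * a k) + t*(a j * a k))^2 :=
      Finset.sum_nonneg fun j _ => Finset.sum_nonneg fun k _ => sq_nonneg _
    rw [key] at hK
    nlinarith [sq_nonneg A2, mul_pos hA2pos hA2pos]

lemma kappa_le_one (N : ℕ) {p : ℝ} (hp : 1 ≤ p) : kappa N p ≤ 1 := by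
  unfold kappa
  split_ifs with h1 h2 h3
  · exact le_refl 1
  · nlinarith
  · nlinarith [sq_nonneg (4 - p)]
  · nlinarith

lemma scal_pge2 (p g2 A2 S HH : ℝ) (hp2 : 2 ≤ p) (hg2 : 0 ≤ g2) (hA2 : 0 ≤ A2)
    (hS : 0 ≤ S) (hHH : 0 ≤ HH) :
    0 ≤ (1 - 1) * g2^2 * HH + 2*(p-2)*g2*A2 + (p-2)^2 * S := by
  have h1 : 0 ≤ 2*(p-2)*g2*A2 := mul_nonneg (mul_nonneg (by linarith) hg2) hA2
  nlinarith [mul_nonneg (sq_nonneg (p-2)) hS]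

lemma scal_N1 (p g2 A2 S HH : ℝ) (hp : 1 ≤ p) (hp2 : p < 2)
    (hE1 : 2*g2*A2 ≤ g2^2*HH + S) (hF : S ≤ g2*A2) :
    0 ≤ (1 - (p-1)^2) * g2^2 * HH + 2*(p-2)*g2*A2 + (p-2)^2 * S := by
  have k1 : (0:ℝ) ≤ (2-p)*p := by nlinarith
  have k2 := mul_le_mul_of_nonneg_left hE1 k1
  have k3 : 0 ≤ 2*((2-p)*(p-1))*(g2*A2 - S) := mul_nonneg (by nlinarith) (by linarith)
  nlinarith [k2, k3]

lemma scal_XS (p X S c : ℝ) (hp : 1 ≤ p) (hp2 : p < 2) (hS : 0 ≤ S) (hXS : S ≤ X)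
    (hc : (p < 4/3 ∧ c = 1 - (4-p)^2/8) ∨ (4/3 ≤ p ∧ c = (p-1)^2)) :
    (2*(2-p)*X - (2-p)^2*S)*(X + S) ≤ 2*(1 - c)*X^2 := by
  rcases hc with ⟨h43, rfl⟩ | ⟨h43, rfl⟩
  · nlinarith [sq_nonneg (p*X - 2*(2-p)*S)]
  · have f1 : 0 ≤ X - S := by linarith
    have f2 : 0 ≤ 2*(p-1)*X - (2-p)*S := by nlinarith
    nlinarith [mul_nonneg (mul_nonneg (by linarith : (0:ℝ) ≤ 2-p) f1) f2]

lemma amgm4 (x y P Q : ℝ) (h : x*y = 4*(P*Q)) : 16*(P*Q) ≤ (x+y)^2 := by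
  nlinarith [sq_nonneg (x-y)]

lemma core {Nn nn : ℕ} {p : ℝ} (hp : 1 ≤ p)
    (W : Fin Nn → Fin nn → ℝ) (M : Fin Nn → Fin nn → Fin nn → ℝ)
    (hsym : ∀ β j k, M β j k = M β k j)
    (g2 : ℝ) (hg2 : g2 = ∑ β, ∑ k, (W β k)^2) (hg2pos : 0 < g2) :
    0 ≤ (1 - kappa Nn p) * g2^2 * (∑ β, ∑ j, ∑ k, (M β j k)^2)
        + 2*(p-2) * g2 * (∑ j, (∑ β, ∑ k, W β k * M β j k)^2)
        + (p-2)^2 * (∑ α, (∑ j, (∑ β, ∑ k, W β k * M β j k) * W α j)^2) := by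
  set a : Fin nn → ℝ := fun j => ∑ β, ∑ k, W β k * M β j k with ha
  set m : Fin Nn → ℝ := fun α => ∑ j, a j * W α j with hm
  set HH := ∑ β, ∑ j, ∑ k, (M β j k)^2 with hHH
  set A2 := ∑ j, (a j)^2 with hA2
  set S := ∑ α, (m α)^2 with hS
  have hav : ∀ j, a j = ∑ β, ∑ k, W β k * M β j k := fun _ => rfl
  have hmv : ∀ α, m α = ∑ j, a j * W α j := fun _ => rfl
  have hHHnn : 0 ≤ HH := Finset.sum_nonneg fun _ _ => Finset.sum_nonneg fun _ _ =>
    Finset.sum_nonneg fun _ _ => sq_nonneg _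
  have hA2nn : 0 ≤ A2 := Finset.sum_nonneg fun _ _ => sq_nonneg _
  have hSnn : 0 ≤ S := Finset.sum_nonneg fun _ _ => sq_nonneg _
  have hκ := kappa_le_one Nn hp
  -- show the goal in terms of S
  show 0 ≤ (1 - kappa Nn p) * g2^2 * HH + 2*(p-2)*g2*A2 + (p-2)^2 * S
  -- Cauchy–Schwarz: S ≤ g2 * A2
  have hF1 : S ≤ g2 * A2 := by
    rw [hS, hg2]
    have : ∀ α, (m α)^2 ≤ (∑ j, (a j)^2) * (∑ j, (W α j)^2) := by
      intro α
      rw [hmv α]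
      exact Finset.sum_mul_sq_le_sq_mul_sq _ _ _
    calc ∑ α, (m α)^2 ≤ ∑ α, (∑ j, (a j)^2) * (∑ j, (W α j)^2) :=
          Finset.sum_le_sum fun α _ => this α
      _ = A2 * ∑ β, ∑ k, (W β k)^2 := by
          rw [← Finset.mul_sum]
      _ = _ := by ring
  rcases le_or_gt 2 p with hp2 | hp2
  · -- p ≥ 2 : all terms nonnegative
    have hκeq : kappa Nn p = 1 := by unfold kappa; rw [if_pos hp2]
    rw [hκeq]
    exact scal_pge2 p g2 A2 S HH hp2 hg2pos.le hA2nn hSnn hHHnn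
  · have hq0 : (0:ℝ) < 2 - p := by linarith
    rcases eq_or_ne Nn 1 with hN1 | hN1
    · -- N = 1
      subst hN1
      have hκeq : kappa 1 p = (p-1)^2 := by
        unfold kappa; rw [if_neg (by linarith), if_pos rfl]
      have hg2' : g2 = ∑ k, (W 0 k)^2 := by rw [hg2, Fin.sum_univ_one]
      have haeq : ∀ j, a j = ∑ k, W 0 k * M 0 j k := by
        intro j; rw [hav j]; exact Fin.sum_univ_one _
      have hE1 := sos_e1 (M 0) (hsym 0) (W 0)
      have e2 : (∑ j, (∑ k, W 0 k * M 0 j k)^2) = A2 := by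
        rw [hA2]; exact Finset.sum_congr rfl fun j _ => by rw [haeq j]
      have e3 : (∑ j, ∑ k, (M 0 j k)^2) = HH := by
        rw [hHH, Fin.sum_univ_one]
      have e4 : (∑ j, W 0 j * ∑ k, W 0 k * M 0 j k) = m 0 := by
        rw [hmv 0]
        exact Finset.sum_congr rfl fun j _ => by rw [haeq j]; ring
      have e5 : S = (m 0)^2 := by rw [hS, Fin.sum_univ_one]
      rw [← hg2', e2, e3, e4] at hE1
      -- hE1 : 2*g2*A2 ≤ g2^2*HH + (m 0)^2
      rw [hκeq, e5]
      have hFm : (m 0)^2 ≤ g2 * A2 := by rw [← e5]; exact hF1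
      exact scal_N1 p g2 A2 ((m 0)^2) HH hp hp2 hE1 hFm
    · -- N ≥ 2
      have hκeq : kappa Nn p = if p < 4/3 then 1 - (4-p)^2/8 else (p-1)^2 := by
        unfold kappa; rw [if_neg (by linarith), if_neg hN1]
      rcases eq_or_lt_of_le hA2nn with hA20 | hA2pos
      · -- a = 0
        have ha0 : ∀ j, a j = 0 := by
          intro j
          have := (Finset.sum_eq_zero_iff_of_nonneg
            (fun i (_ : i ∈ Finset.univ) => sq_nonneg (a i))).1 hA20.symm j (Finset.mem_univ j)
          exact pow_eq_zero_iff (n := 2) (by norm_num) |>.1 this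
        have hS0 : S = 0 := by
          rw [hS]; apply Finset.sum_eq_zero; intro α _
          rw [hmv α]; simp [ha0]
        rw [← hA20, hS0]
        have : 0 ≤ (1 - kappa Nn p) * g2^2 * HH :=
          mul_nonneg (mul_nonneg (by linarith) (sq_nonneg _)) hHHnn
        linarith
      · -- main case
        set ub : Fin Nn → Fin nn → ℝ := fun β j => ∑ k, a k * M β j k with hub
        set tb : Fin Nn → ℝ := fun β => ∑ j, a j * ub β j with htb
        set U := ∑ β, ∑ j, (ub β j)^2 with hU
        set D' := ∑ β, (tb β)^2 with hD'
        have hubv : ∀ β j, ub β j = ∑ k, a k * M β j k := fun _ _ => rfl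
        have htbv : ∀ β, tb β = ∑ j, a j * ub β j := fun _ => rfl
        have hUnn : 0 ≤ U := Finset.sum_nonneg fun _ _ => Finset.sum_nonneg fun _ _ => sq_nonneg _
        have hD'nn : 0 ≤ D' := Finset.sum_nonneg fun _ _ => sq_nonneg _
        have hE1 : 2*A2*U ≤ A2^2*HH + D' := by
          have hb : ∀ β : Fin Nn, 2*A2*(∑ j, (ub β j)^2)
              ≤ A2^2*(∑ j, ∑ k, (M β j k)^2) + (tb β)^2 := by
            intro β
            have := sos_e1 (M β) (hsym β) a
            rw [← hA2] at this
            exact this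
          calc 2*A2*U = ∑ β, 2*A2*(∑ j, (ub β j)^2) := by
                rw [hU, Finset.mul_sum]
            _ ≤ ∑ β, (A2^2*(∑ j, ∑ k, (M β j k)^2) + (tb β)^2) :=
                Finset.sum_le_sum fun β _ => hb β
            _ = A2^2*HH + D' := by
                rw [Finset.sum_add_distrib, ← Finset.mul_sum, ← hHH, ← hD']
        have hA2eq : A2 = ∑ β, ∑ k, W β k * ub β k := by
          calc A2 = ∑ j, a j * a j := by
                rw [hA2]; exact Finset.sum_congr rfl fun j _ => sq (a j)
            _ = ∑ j, ∑ β, ∑ k, a j * (W β k * M β j k) := by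
                apply Finset.sum_congr rfl; intro j _
                rw [hav j]
                simp only [Finset.mul_sum]
            _ = ∑ β, ∑ k, ∑ j, a j * (W β k * M β j k) := by
                rw [Finset.sum_comm]
                exact Finset.sum_congr rfl fun β _ => Finset.sum_comm
            _ = ∑ β, ∑ k, W β k * ub β k := by
                apply Finset.sum_congr rfl; intro β _
                apply Finset.sum_congr rfl; intro k _
                rw [hubv β k, Finset.mul_sum]
                apply Finset.sum_congr rfl; intro j _
                rw [hsym β j k]; ring
        have hAg2S : S ≤ A2*g2 := by rw [mul_comm]; exact hF1
        have hD'U : D' ≤ A2 * U := by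
          rw [hD', hU, Finset.mul_sum]
          apply Finset.sum_le_sum
          intro β _
          rw [htbv β]
          exact le_trans (Finset.sum_mul_sq_le_sq_mul_sq _ _ _) (by rw [← hA2])
        set vv : Fin Nn → Fin nn → ℝ := fun β j => A2 * W β j - m β * a j with hvv
        set rr : Fin Nn → Fin nn → ℝ := fun β j => A2 * ub β j - tb β * a j with hrr
        have hvvv : ∀ β j, vv β j = A2 * W β j - m β * a j := fun _ _ => rfl
        have hrrv : ∀ β j, rr β j = A2 * ub β j - tb β * a j := fun _ _ => rfl
        have hWa : ∀ β, ∑ j, W β j * a j = m β := by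
          intro β; rw [hmv β]
          exact Finset.sum_congr rfl fun j _ => mul_comm _ _
        have haa : ∑ j, a j * a j = A2 := by
          rw [hA2]; exact Finset.sum_congr rfl fun j _ => (sq (a j)).symm
        have halpha : ∑ β, ∑ j, vv β j * rr β j = A2^3 - A2*(∑ β, m β * tb β) := by
          have hb : ∀ β : Fin Nn, ∑ j, vv β j * rr β j
              = A2^2*(∑ j, W β j * ub β j) - A2*(m β * tb β) := by
            intro β
            calc ∑ j, vv β j * rr β j
                = ∑ j, (A2^2*(W β j * ub β j) - A2*tb β*(W β j * a j)
                    - A2*m β*(a j * ub β j) + m β*tb β*(a j * a j)) := by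
                  apply Finset.sum_congr rfl; intro j _; rw [hvvv β j, hrrv β j]; ring
              _ = A2^2*(∑ j, W β j * ub β j) - A2*tb β*(∑ j, W β j * a j)
                    - A2*m β*(∑ j, a j * ub β j) + m β*tb β*(∑ j, a j * a j) := by
                  simp only [Finset.sum_add_distrib, Finset.sum_sub_distrib, ← Finset.mul_sum]
              _ = A2^2*(∑ j, W β j * ub β j) - A2*(m β * tb β) := by
                  rw [hWa β, ← htbv β, haa]
                  ring
          calc ∑ β, ∑ j, vv β j * rr β j
              = ∑ β, (A2^2*(∑ j, W β j * ub β j) - A2*(m β * tb β)) :=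
                Finset.sum_congr rfl fun β _ => hb β
            _ = A2^2*(∑ β, ∑ j, W β j * ub β j) - A2*(∑ β, m β * tb β) := by
                rw [Finset.sum_sub_distrib, ← Finset.mul_sum, ← Finset.mul_sum]
            _ = A2^3 - A2*(∑ β, m β * tb β) := by
                rw [show (∑ β, ∑ j, W β j * ub β j) = A2 from hA2eq.symm]
                ring
        have hv2 : ∑ β, ∑ j, (vv β j)^2 = A2*(A2*g2 - S) := by
          have hb : ∀ β : Fin Nn, ∑ j, (vv β j)^2
              = A2^2*(∑ j, (W β j)^2) - A2*(m β)^2 := by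
            intro β
            calc ∑ j, (vv β j)^2
                = ∑ j, (A2^2*(W β j)^2 - 2*A2*m β*(W β j * a j) + (m β)^2*(a j * a j)) := by
                  apply Finset.sum_congr rfl; intro j _; rw [hvvv β j]; ring
              _ = A2^2*(∑ j, (W β j)^2) - 2*A2*m β*(∑ j, W β j * a j)
                    + (m β)^2*(∑ j, a j * a j) := by
                  simp only [Finset.sum_add_distrib, Finset.sum_sub_distrib, ← Finset.mul_sum]
              _ = _ := by rw [hWa β, haa]; ring
          calc ∑ β, ∑ j, (vv β j)^2
              = ∑ β, (A2^2*(∑ j, (W β j)^2) - A2*(m β)^2) :=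
                Finset.sum_congr rfl fun β _ => hb β
            _ = A2^2*(∑ β, ∑ j, (W β j)^2) - A2*S := by
                rw [Finset.sum_sub_distrib, ← Finset.mul_sum, ← Finset.mul_sum, hS]
            _ = A2*(A2*g2 - S) := by rw [← hg2]; ring
        have hr2 : ∑ β, ∑ j, (rr β j)^2 = A2*(A2*U - D') := by
          have hb : ∀ β : Fin Nn, ∑ j, (rr β j)^2
              = A2^2*(∑ j, (ub β j)^2) - A2*(tb β)^2 := by
            intro β
            calc ∑ j, (rr β j)^2
                = ∑ j, (A2^2*(ub β j)^2 - 2*A2*tb β*(a j * ub β j) + (tb β)^2*(a j * a j)) := by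
                  apply Finset.sum_congr rfl; intro j _; rw [hrrv β j]; ring
              _ = A2^2*(∑ j, (ub β j)^2) - 2*A2*tb β*(∑ j, a j * ub β j)
                    + (tb β)^2*(∑ j, a j * a j) := by
                  simp only [Finset.sum_add_distrib, Finset.sum_sub_distrib, ← Finset.mul_sum]
              _ = _ := by rw [← htbv β, haa]; ring
          calc ∑ β, ∑ j, (rr β j)^2
              = ∑ β, (A2^2*(∑ j, (ub β j)^2) - A2*(tb β)^2) :=
                Finset.sum_congr rfl fun β _ => hb β
            _ = A2^2*U - A2*D' := by
                rw [Finset.sum_sub_distrib, ← Finset.mul_sum, ← Finset.mul_sum, ← hU, ← hD']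
            _ = A2*(A2*U - D') := by ring
        -- Cauchy-Schwarz over double sums
        have hflat : ∀ F : Fin Nn → Fin nn → ℝ,
            ∑ β, ∑ j, F β j = ∑ z : Fin Nn × Fin nn, F z.1 z.2 := by
          intro F; rw [Fintype.sum_prod_type]
        have hCSbig : (∑ β, ∑ j, vv β j * rr β j)^2
            ≤ (∑ β, ∑ j, (vv β j)^2) * (∑ β, ∑ j, (rr β j)^2) := by
          rw [hflat (fun β j => vv β j * rr β j), hflat (fun β j => (vv β j)^2),
              hflat (fun β j => (rr β j)^2)]
          exact Finset.sum_mul_sq_le_sq_mul_sq _ _ _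
        have hCS2 : (∑ β, m β * tb β)^2 ≤ S * D' := by
          rw [hS, hD']
          exact Finset.sum_mul_sq_le_sq_mul_sq _ _ _
        -- scalar endgame
        obtain ⟨X, hX⟩ : ∃ X : ℝ, X = g2 * A2 := ⟨_, rfl⟩
        have hXpos : 0 < X := hX ▸ mul_pos hg2pos hA2pos
        have hXS : S ≤ X := hX ▸ hF1
        obtain ⟨al, hal⟩ : ∃ v : ℝ, v = ∑ β, m β * tb β := ⟨_, rfl⟩
        obtain ⟨bb, hbb⟩ : ∃ v : ℝ, v = ∑ β, ∑ j, vv β j * rr β j := ⟨_, rfl⟩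
        obtain ⟨P, hP⟩ : ∃ v : ℝ, v = S * D' := ⟨_, rfl⟩
        obtain ⟨QQ, hQQ⟩ : ∃ v : ℝ, v = (A2*g2 - S) * (A2*U - D') := ⟨_, rfl⟩
        have hPnn : 0 ≤ P := hP ▸ mul_nonneg hSnn hD'nn
        have hQQnn : 0 ≤ QQ :=
          hQQ ▸ mul_nonneg (sub_nonneg.2 hAg2S) (sub_nonneg.2 hD'U)
        have h_id : A2^3 = A2*al + bb := by rw [hal, hbb, halpha]; ring
        have hαP : al ≤ Real.sqrt P := by
          calc al ≤ |al| := le_abs_self _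
            _ = Real.sqrt (al^2) := (Real.sqrt_sq_eq_abs al).symm
            _ ≤ Real.sqrt P := Real.sqrt_le_sqrt (by rw [hal, hP]; exact hCS2)
        have hbQ : bb ≤ A2 * Real.sqrt QQ := by
          have h1 : bb^2 ≤ A2^2 * QQ := by
            rw [hbb, hQQ]
            calc (∑ β, ∑ j, vv β j * rr β j)^2
                ≤ (∑ β, ∑ j, (vv β j)^2) * (∑ β, ∑ j, (rr β j)^2) := hCSbig
              _ = A2^2 * ((A2*g2 - S) * (A2*U - D')) := by rw [hv2, hr2]; ring
          calc bb ≤ |bb| := le_abs_self _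
            _ = Real.sqrt (bb^2) := (Real.sqrt_sq_eq_abs bb).symm
            _ ≤ Real.sqrt (A2^2 * QQ) := Real.sqrt_le_sqrt h1
            _ = A2 * Real.sqrt QQ := by
                rw [Real.sqrt_mul (sq_nonneg A2), Real.sqrt_sq hA2pos.le]
        have hA2sq : A2^2 ≤ Real.sqrt P + Real.sqrt QQ := by
          have h1 : A2 * A2^2 ≤ A2 * (Real.sqrt P + Real.sqrt QQ) := by
            calc A2 * A2^2 = A2*al + bb := by rw [← h_id]; ring
              _ ≤ A2*(Real.sqrt P) + A2*(Real.sqrt QQ) :=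
                  add_le_add (mul_le_mul_of_nonneg_left hαP hA2pos.le) hbQ
              _ = A2 * (Real.sqrt P + Real.sqrt QQ) := by ring
          exact le_of_mul_le_mul_left h1 hA2pos
        have hPQ : 4*Real.sqrt (P*QQ) ≤ 4*S*(A2*U - D') + D'*(A2*g2 - S) := by
          obtain ⟨xx, hxx⟩ : ∃ v : ℝ, v = 4*S*(A2*U - D') := ⟨_, rfl⟩
          obtain ⟨yy, hyy⟩ : ∃ v : ℝ, v = D'*(A2*g2 - S) := ⟨_, rfl⟩
          rw [← hxx, ← hyy]
          have hxnn : 0 ≤ xx :=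
            hxx ▸ mul_nonneg (mul_nonneg (by norm_num) hSnn) (sub_nonneg.2 hD'U)
          have hynn : 0 ≤ yy := hyy ▸ mul_nonneg hD'nn (sub_nonneg.2 hAg2S)
          have hxy : 16*(P*QQ) ≤ (xx+yy)^2 :=
            amgm4 xx yy P QQ (by rw [hxx, hyy, hP, hQQ]; ring)
          calc 4*Real.sqrt (P*QQ) = Real.sqrt (16*(P*QQ)) := by
                rw [show (16:ℝ)*(P*QQ) = 4^2*(P*QQ) by norm_num,
                    Real.sqrt_mul (show (0:ℝ) ≤ 4^2 by norm_num) (P*QQ),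
                    Real.sqrt_sq (by norm_num : (0:ℝ) ≤ 4)]
            _ ≤ Real.sqrt ((xx+yy)^2) := Real.sqrt_le_sqrt hxy
            _ = xx + yy := Real.sqrt_sq (by linarith only [hxnn, hynn])
        have key4 : 2*A2^4 ≤ (g2*A2 + S)*(2*A2*U - D') := by
          have h1 : A2^4 ≤ (Real.sqrt P + Real.sqrt QQ)^2 := by
            have := mul_self_le_mul_self (sq_nonneg A2) hA2sq
            calc A2^4 = A2^2 * A2^2 := by ring
              _ ≤ (Real.sqrt P + Real.sqrt QQ) * (Real.sqrt P + Real.sqrt QQ) := this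
              _ = _ := by ring
          have h2 : (Real.sqrt P + Real.sqrt QQ)^2 = P + QQ + 2*Real.sqrt (P*QQ) := by
            have hs : Real.sqrt P * Real.sqrt QQ = Real.sqrt (P*QQ) :=
              (Real.sqrt_mul hPnn QQ).symm
            rw [add_sq, Real.sq_sqrt hPnn, Real.sq_sqrt hQQnn, mul_assoc, hs]
            ring
          have h3 : 2*A2^4 ≤ 2*P + 2*QQ + 4*Real.sqrt (P*QQ) := by
            rw [h2] at h1; linarith only [h1]
          have h4 : 2*P + 2*QQ + (4*S*(A2*U - D') + D'*(A2*g2 - S))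
              = (g2*A2 + S)*(2*A2*U - D') := by
            rw [hP, hQQ]; ring
          linarith only [hPQ, h3, h4]
        have key6 : 2*A2^2 ≤ (g2*A2 + S)*HH := by
          have h1 : 2*A2*U - D' ≤ A2^2*HH := by linarith only [hE1]
          have h2 : (g2*A2 + S)*(2*A2*U - D') ≤ (g2*A2 + S)*(A2^2*HH) :=
            mul_le_mul_of_nonneg_left h1
              (by linarith only [mul_pos hg2pos hA2pos, hSnn])
          have e1 : (g2*A2 + S)*(A2^2*HH) = ((g2*A2 + S)*HH)*A2^2 := by ring
          have e2 : (2*A2^2)*A2^2 = 2*A2^4 := by ring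
          have h4 : (2*A2^2)*A2^2 ≤ ((g2*A2 + S)*HH)*A2^2 := by
            linarith only [h2, e1, e2, key4]
          exact le_of_mul_le_mul_right h4 (by positivity)
        have hscalar : (2*(2-p)*X - (2-p)^2*S)*(X + S) ≤ 2*(1 - kappa Nn p)*X^2 := by
          refine scal_XS p X S (kappa Nn p) hp hp2 hSnn hXS ?_
          rw [hκeq]
          by_cases h43 : p < 4/3
          · exact Or.inl ⟨h43, by rw [if_pos h43]⟩
          · exact Or.inr ⟨le_of_not_gt h43, by rw [if_neg h43]⟩
        have hfinal : 2*(2-p)*X - (2-p)^2*S ≤ (1 - kappa Nn p)*g2^2*HH := by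
          have h1 : 2*(1 - kappa Nn p)*X^2 = ((1 - kappa Nn p)*g2^2)*(2*A2^2) := by
            rw [hX]; ring
          have h2 : ((1 - kappa Nn p)*g2^2)*(2*A2^2)
              ≤ ((1 - kappa Nn p)*g2^2)*((g2*A2+S)*HH) :=
            mul_le_mul_of_nonneg_left key6
              (mul_nonneg (by linarith) (sq_nonneg _))
          have h3 : (2*(2-p)*X - (2-p)^2*S)*(X+S)
              ≤ ((1 - kappa Nn p)*g2^2*HH)*(X+S) := by
            calc (2*(2-p)*X - (2-p)^2*S)*(X + S) ≤ 2*(1 - kappa Nn p)*X^2 := hscalar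
              _ = ((1 - kappa Nn p)*g2^2)*(2*A2^2) := h1
              _ ≤ ((1 - kappa Nn p)*g2^2)*((g2*A2+S)*HH) := h2
              _ = ((1 - kappa Nn p)*g2^2*HH)*(X+S) := by rw [hX]; ring
          have hXSpos : 0 < X + S := by linarith only [hXpos, hSnn]
          exact le_of_mul_le_mul_right h3 hXSpos
        rw [hX] at hfinal
        linarith only [hfinal, show (p-2)^2*S = (2-p)^2*S from by ring,
          show 2*(p-2)*g2*A2 = -(2*(2-p)*(g2*A2)) from by ring]

lemma final_scalar {N : ℕ} (p κ g P HH A2 : ℝ) (Lf mf : Fin N → ℝ) (hg : 0 < g)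
    (hcore : 0 ≤ (1-κ)*(g^2)^2*HH + 2*(p-2)*g^2*A2 + (p-2)^2*(∑ α, (mf α)^2)) :
    2*(p-2) * P^2 * ((∑ β, Lf β * mf β) - A2) / g^2
      + P^2 * ((∑ β, (Lf β)^2) - HH) + κ * P^2 * HH
      ≤ ∑ α, ((p-2) * P * (mf α) / g^2 + P * (Lf α))^2 := by
  have hgne : g ≠ 0 := ne_of_gt hg
  have expand : ∀ α, ((p-2) * P * (mf α) / g^2 + P * (Lf α))^2
      = P^2*(Lf α)^2 + (2*(p-2)*P^2/g^2)*(Lf α * mf α) + ((p-2)^2*P^2/g^4)*(mf α)^2 := by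
    intro α; field_simp; ring
  rw [Finset.sum_congr rfl fun α _ => expand α]
  simp only [Finset.sum_add_distrib, ← Finset.mul_sum]
  obtain ⟨Lq, hLq⟩ : ∃ v : ℝ, v = ∑ β, (Lf β)^2 := ⟨_, rfl⟩
  obtain ⟨LM, hLM⟩ : ∃ v : ℝ, v = ∑ β, Lf β * mf β := ⟨_, rfl⟩
  obtain ⟨Sm, hSm⟩ : ∃ v : ℝ, v = ∑ α, (mf α)^2 := ⟨_, rfl⟩
  rw [← hLq, ← hLM, ← hSm]
  rw [← hSm] at hcore
  have h1 : P^2*Lq + (2*(p-2)*P^2/g^2)*LM + ((p-2)^2*P^2/g^4)*Sm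
      - (2*(p-2)*P^2*(LM - A2)/g^2 + P^2*(Lq - HH) + κ*P^2*HH)
      = (P^2/g^4) * ((1-κ)*(g^2)^2*HH + 2*(p-2)*g^2*A2 + (p-2)^2*Sm) := by
    field_simp
    ring
  have h2 : 0 ≤ (P^2/g^4) * ((1-κ)*(g^2)^2*HH + 2*(p-2)*g^2*A2 + (p-2)^2*Sm) :=
    mul_nonneg (by positivity) hcore
  linarith [h1, h2]

theorem stmt13 {n N : ℕ} (hn : 2 ≤ n) (hN : 1 ≤ N) (p : ℝ) (hp : 1 ≤ p)
    (Ω : Set (Fin n → ℝ)) (hΩ : IsOpen Ω)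
    (u : Fin N → (Fin n → ℝ) → ℝ)
    (hu : ∀ α, ContDiffOn ℝ 3 (u α) Ω)
    (gn : (Fin n → ℝ) → ℝ)
    (hgn : ∀ y, gn y = Real.sqrt (∑ α, ∑ j, (pd j (u α) y) ^ 2)) :
    ∀ x ∈ Ω, gn x ≠ 0 →
      (∑ j, pd j (fun y => gn y ^ (2 * (p - 2)) *
            ((∑ β, (∑ k, pd k (fun z => pd k (u β) z) y) * pd j (u β) y)
              - (1/2) * pd j (fun z => ∑ β, ∑ k, (pd k (u β) z) ^ 2) y)) x)
        + kappa N p * gn x ^ (2 * (p - 2)) *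
            (∑ α, ∑ i, ∑ j, (pd i (fun y => pd j (u α) y) x) ^ 2)
      ≤ ∑ α, (∑ j, pd j (fun y => gn y ^ (p - 2) * pd j (u α) y) x) ^ 2 := by
  intro x hxΩ hgnx
  -- ## smoothness infrastructure
  have hA : ∀ β k, ContDiffOn ℝ 2 (fun y => pd k (u β) y) Ω := by
    intro β k
    show ContDiffOn ℝ 2 (fun y => (fderiv ℝ (u β) y) (Pi.single k 1)) Ω
    exact ((hu β).fderiv_of_isOpen hΩ (by norm_num)).clm_apply contDiffOn_const
  have hHmC : ∀ β j k, ContDiffOn ℝ 1 (fun y => pd j (fun z => pd k (u β) z) y) Ω := by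
    intro β j k
    show ContDiffOn ℝ 1 (fun y => (fderiv ℝ (fun z => pd k (u β) z) y) (Pi.single j 1)) Ω
    exact ((hA β k).fderiv_of_isOpen hΩ (by norm_num)).clm_apply contDiffOn_const
  have dA : ∀ β k y, y ∈ Ω → DifferentiableAt ℝ (fun z => pd k (u β) z) y := by
    intro β k y hy
    exact ((hA β k).contDiffAt (hΩ.mem_nhds hy)).differentiableAt (by norm_num)
  have dHm : ∀ β j k y, y ∈ Ω →
      DifferentiableAt ℝ (fun z => pd j (fun w => pd k (u β) w) z) y := by
    intro β j k y hy
    exact ((hHmC β j k).contDiffAt (hΩ.mem_nhds hy)).differentiableAt (by norm_num)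
  have dfu : ∀ β y, y ∈ Ω → DifferentiableAt ℝ (fderiv ℝ (u β)) y := by
    intro β y hy
    exact (((hu β).fderiv_of_isOpen (m := 2) hΩ (by norm_num)).contDiffAt
      (hΩ.mem_nhds hy)).differentiableAt (by norm_num)
  have dfA : ∀ β k y, y ∈ Ω →
      DifferentiableAt ℝ (fderiv ℝ (fun z => pd k (u β) z)) y := by
    intro β k y hy
    exact (((hA β k).fderiv_of_isOpen (m := 1) hΩ (by norm_num)).contDiffAt
      (hΩ.mem_nhds hy)).differentiableAt (by norm_num)
  have hsymf : ∀ β y, y ∈ Ω → ∀ j k,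
      pd j (fun z => pd k (u β) z) y = pd k (fun z => pd j (u β) z) y := by
    intro β y hy j k
    apply clairaut ?_ (dfu β y hy)
    filter_upwards [hΩ.mem_nhds hy] with z hz
    exact ((hu β).contDiffAt (hΩ.mem_nhds hz)).differentiableAt (by norm_num)
  -- ## the squared-gradient function
  set G2 : (Fin n → ℝ) → ℝ := fun z => ∑ β, ∑ k, (pd k (u β) z) ^ 2 with hG2def
  have hG2v : ∀ y, G2 y = ∑ β, ∑ k, (pd k (u β) y) ^ 2 := fun _ => rfl
  have hG2C : ContDiffOn ℝ 2 G2 Ω :=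
    ContDiffOn.sum fun β _ => ContDiffOn.sum fun k _ => (hA β k).pow 2
  have dG2 : ∀ y, y ∈ Ω → DifferentiableAt ℝ G2 y := by
    intro y hy
    exact (hG2C.contDiffAt (hΩ.mem_nhds hy)).differentiableAt (by norm_num)
  have dsum2 : ∀ β y, y ∈ Ω → DifferentiableAt ℝ (fun z => ∑ k, (pd k (u β) z)^2) y := by
    intro β y hy
    exact DifferentiableAt.fun_sum fun k _ => (dA β k y hy).pow 2
  have pdG2 : ∀ j y, y ∈ Ω → pd j G2 y
      = 2 * ∑ β, ∑ k, pd k (u β) y * pd j (fun z => pd k (u β) z) y := by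
    intro j y hy
    calc pd j G2 y = ∑ β, pd j (fun z => ∑ k, (pd k (u β) z)^2) y :=
          pd_sum Finset.univ (fun β _ => dsum2 β y hy) j
      _ = ∑ β, ∑ k, pd j (fun z => (pd k (u β) z)^2) y :=
          Finset.sum_congr rfl fun β _ =>
            pd_sum Finset.univ (fun k _ => (dA β k y hy).pow 2) j
      _ = ∑ β, ∑ k, 2 * pd k (u β) y * pd j (fun z => pd k (u β) z) y :=
          Finset.sum_congr rfl fun β _ => Finset.sum_congr rfl fun k _ =>
            pd_sq (dA β k y hy) j
      _ = 2 * ∑ β, ∑ k, pd k (u β) y * pd j (fun z => pd k (u β) z) y := by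
          rw [Finset.mul_sum]
          exact Finset.sum_congr rfl fun β _ => by
            rw [Finset.mul_sum]
            exact Finset.sum_congr rfl fun k _ => by ring
  have hgnV : ∀ y, gn y = Real.sqrt (G2 y) := fun y => hgn y
  have hG2x : 0 < G2 x := by
    rcases (Finset.sum_nonneg fun β _ => Finset.sum_nonneg fun k _ =>
      sq_nonneg (pd k (u β) x) : 0 ≤ G2 x).eq_or_lt with h | h
    · exact absurd (by rw [hgnV x, show G2 x = 0 from h.symm, Real.sqrt_zero]) hgnx
    · exact h
  have hgpos : 0 < gn x := by rw [hgnV x]; exact Real.sqrt_pos.2 hG2x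
  have hgne : gn x ≠ 0 := ne_of_gt hgpos
  have dgn : DifferentiableAt ℝ gn x := by
    rw [show gn = fun y => Real.sqrt (G2 y) from funext hgnV]
    exact ((Real.hasDerivAt_sqrt (ne_of_gt hG2x)).comp_hasFDerivAt x
      (dG2 x hxΩ).hasFDerivAt).differentiableAt
  have hg2sum : gn x ^ 2 = ∑ β, ∑ k, (pd k (u β) x)^2 := by
    rw [hgnV x, Real.sq_sqrt hG2x.le]
  -- ## value of ∇gn at x
  set Sv : Fin n → ℝ :=
    fun j => ∑ β, ∑ k, pd k (u β) x * pd j (fun z => pd k (u β) z) x with hSvdef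
  have hSvv : ∀ j, Sv j = ∑ β, ∑ k, pd k (u β) x * pd j (fun z => pd k (u β) z) x :=
    fun _ => rfl
  have pdgn : ∀ j, pd j gn x = Sv j / gn x := by
    intro j
    have h1 : pd j gn x = pd j (fun y => Real.sqrt (G2 y)) x := by
      rw [show gn = fun y => Real.sqrt (G2 y) from funext hgnV]
    rw [h1, pd_sqrt (dG2 x hxΩ) (ne_of_gt hG2x) j, pdG2 j x hxΩ, ← hgnV x, ← hSvv j,
      mul_div_mul_left _ _ (two_ne_zero)]
  -- ## rpow differentiability and derivatives
  have drp : ∀ c : ℝ, DifferentiableAt ℝ (fun y => gn y ^ c) x := by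
    intro c
    exact ((Real.hasDerivAt_rpow_const (p := c) (Or.inl hgne)).comp_hasFDerivAt x
      dgn.hasFDerivAt).differentiableAt
  have pdrp : ∀ c : ℝ, ∀ j, pd j (fun y => gn y ^ c) x
      = c * gn x ^ (c-1) * (Sv j / gn x) := by
    intro c j; rw [pd_rpow c dgn hgne j, pdgn j]
  have eQ : gn x ^ (2*(p-2)) = (gn x ^ (p-2))^2 := by
    rw [mul_comm, Real.rpow_mul hgpos.le,
      show (2:ℝ) = ((2:ℕ):ℝ) by norm_num, Real.rpow_natCast]
  -- ## RHS per-term evaluation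
  have eRj : ∀ α j, pd j (fun y => gn y ^ (p - 2) * pd j (u α) y) x
      = (p-2) * gn x ^ (p-2) * (Sv j * pd j (u α) x) / gn x ^ 2
        + gn x ^ (p-2) * pd j (fun z => pd j (u α) z) x := by
    intro α j
    rw [pd_mul (drp (p-2)) (dA α j x hxΩ) j, pdrp (p-2) j,
      Real.rpow_sub hgpos, Real.rpow_one]
    field_simp
  -- ## eventual equality for y ↦ pd j G2 y near x, and its differentiability
  have evG2 : ∀ j, (fun y => pd j G2 y) =ᶠ[nhds x]
      (fun y => 2 * ∑ β, ∑ k, pd k (u β) y * pd j (fun z => pd k (u β) z) y) := by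
    intro j
    filter_upwards [hΩ.mem_nhds hxΩ] with y hy using pdG2 j y hy
  have dexpl : ∀ j, DifferentiableAt ℝ
      (fun y => 2 * ∑ β, ∑ k, pd k (u β) y * pd j (fun z => pd k (u β) z) y) x := by
    intro j
    exact ((DifferentiableAt.fun_sum fun β _ => DifferentiableAt.fun_sum fun k _ =>
      (dA β k x hxΩ).mul (dHm β j k x hxΩ)).const_mul 2)
  have dpdG2 : ∀ j, DifferentiableAt ℝ (fun y => pd j G2 y) x := by
    intro j
    exact (Filter.EventuallyEq.differentiableAt_iff (evG2 j)).2 (dexpl j)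
  have pdpdG2 : ∀ j, pd j (fun y => pd j G2 y) x
      = 2 * ∑ β, ∑ k, (pd j (fun z => pd k (u β) z) x * pd j (fun z => pd k (u β) z) x
          + pd k (u β) x * pd j (fun y => pd j (fun z => pd k (u β) z) y) x) := by
    intro j
    rw [pd_congr (evG2 j),
      pd_const_mul 2 (DifferentiableAt.fun_sum fun β _ => DifferentiableAt.fun_sum fun k _ =>
        (dA β k x hxΩ).fun_mul (dHm β j k x hxΩ)) j,
      pd_sum _ (fun β _ => DifferentiableAt.fun_sum fun k _ =>
        (dA β k x hxΩ).fun_mul (dHm β j k x hxΩ)) j]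
    congr 1
    refine Finset.sum_congr rfl fun β _ => ?_
    rw [pd_sum _ (fun k _ => (dA β k x hxΩ).fun_mul (dHm β j k x hxΩ)) j]
    refine Finset.sum_congr rfl fun k _ => ?_
    rw [pd_mul (dA β k x hxΩ) (dHm β j k x hxΩ) j]
  -- ## third-derivative swap
  have hT1swap : ∀ β j k, pd j (fun y => pd k (fun z => pd k (u β) z) y) x
      = pd k (fun y => pd k (fun z => pd j (u β) z) y) x := by
    intro β j k
    have hev : ∀ᶠ y in nhds x, DifferentiableAt ℝ (fun z => pd k (u β) z) y := by
      filter_upwards [hΩ.mem_nhds hxΩ] with y hy using dA β k y hy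
    have s1 := clairaut (f := fun z => pd k (u β) z) hev (dfA β k x hxΩ) j k
    have s2 : (fun y => pd j (fun z => pd k (u β) z) y)
        =ᶠ[nhds x] (fun y => pd k (fun z => pd j (u β) z) y) := by
      filter_upwards [hΩ.mem_nhds hxΩ] with y hy using hsymf β y hy j k
    rw [s1]
    exact pd_congr s2
  -- ## LHS per-term evaluation
  have dLf : ∀ β, DifferentiableAt ℝ (fun y => ∑ k, pd k (fun z => pd k (u β) z) y) x :=
    fun β => DifferentiableAt.fun_sum fun k _ => dHm β k k x hxΩ
  have dS1 : ∀ j, DifferentiableAt ℝ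
      (fun y => ∑ β, (∑ k, pd k (fun z => pd k (u β) z) y) * pd j (u β) y) x :=
    fun j => DifferentiableAt.fun_sum fun β _ => (dLf β).mul (dA β j x hxΩ)
  have pdS1 : ∀ j, pd j (fun y => ∑ β, (∑ k, pd k (fun z => pd k (u β) z) y) * pd j (u β) y) x
      = ∑ β, ((∑ k, pd j (fun y => pd k (fun z => pd k (u β) z) y) x) * pd j (u β) x
          + (∑ k, pd k (fun z => pd k (u β) z) x) * pd j (fun z => pd j (u β) z) x) := by
    intro j
    rw [pd_sum _ (fun β _ => (dLf β).fun_mul (dA β j x hxΩ)) j]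
    refine Finset.sum_congr rfl fun β _ => ?_
    rw [pd_mul (dLf β) (dA β j x hxΩ) j, pd_sum _ (fun k _ => dHm β k k x hxΩ) j]
  have dB : ∀ j, DifferentiableAt ℝ
      (fun y => (∑ β, (∑ k, pd k (fun z => pd k (u β) z) y) * pd j (u β) y)
        - 1/2 * pd j G2 y) x :=
    fun j => (dS1 j).sub ((dpdG2 j).const_mul (1/2))
  have eLj : ∀ j, pd j (fun y => gn y ^ (2*(p-2)) *
        ((∑ β, (∑ k, pd k (fun z => pd k (u β) z) y) * pd j (u β) y)
          - 1/2 * pd j G2 y)) x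
      = (2*(p-2) * (gn x ^ (p-2))^2 / gn x^2) *
          (Sv j * ((∑ β, (∑ k, pd k (fun z => pd k (u β) z) x) * pd j (u β) x) - Sv j))
        + (gn x ^ (p-2))^2 *
          ((∑ β, ((∑ k, pd j (fun y => pd k (fun z => pd k (u β) z) y) x) * pd j (u β) x
              + (∑ k, pd k (fun z => pd k (u β) z) x) * pd j (fun z => pd j (u β) z) x))
            - ∑ β, ∑ k, (pd j (fun z => pd k (u β) z) x * pd j (fun z => pd k (u β) z) x
              + pd k (u β) x * pd j (fun y => pd j (fun z => pd k (u β) z) y) x)) := by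
    intro j
    rw [pd_mul (drp (2*(p-2))) (dB j) j, pdrp (2*(p-2)) j,
      pd_sub (dS1 j) ((dpdG2 j).const_mul (1/2)) j,
      pd_const_mul (1/2) (dpdG2 j) j, pdpdG2 j, pdS1 j,
      pdG2 j x hxΩ, ← hSvv j, Real.rpow_sub hgpos, Real.rpow_one, eQ]
    field_simp
  -- ## cancellation of third derivatives
  have hcancel : ∀ β,
      (∑ j, (∑ k, pd j (fun y => pd k (fun z => pd k (u β) z) y) x) * pd j (u β) x)
      = ∑ j, ∑ k, pd k (u β) x * pd j (fun y => pd j (fun z => pd k (u β) z) y) x := by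
    intro β
    calc (∑ j, (∑ k, pd j (fun y => pd k (fun z => pd k (u β) z) y) x) * pd j (u β) x)
        = ∑ j, ∑ k, pd k (fun y => pd k (fun z => pd j (u β) z) y) x * pd j (u β) x := by
          refine Finset.sum_congr rfl fun j _ => ?_
          rw [Finset.sum_mul]
          exact Finset.sum_congr rfl fun k _ => by rw [hT1swap β j k]
      _ = ∑ k, ∑ j, pd k (fun y => pd k (fun z => pd j (u β) z) y) x * pd j (u β) x :=
          Finset.sum_comm
      _ = ∑ j, ∑ k, pd k (u β) x * pd j (fun y => pd j (fun z => pd k (u β) z) y) x :=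
          Finset.sum_congr rfl fun j _ => Finset.sum_congr rfl fun k _ => mul_comm _ _
  -- ## sum identities
  have hSig : ∑ j, Sv j * ((∑ β, (∑ k, pd k (fun z => pd k (u β) z) x) * pd j (u β) x) - Sv j)
      = (∑ β, (∑ k, pd k (fun z => pd k (u β) z) x) * (∑ j, Sv j * pd j (u β) x))
        - ∑ j, (Sv j)^2 := by
    rw [Finset.sum_congr rfl (fun j (_ : j ∈ Finset.univ) => mul_sub (Sv j) _ _),
      Finset.sum_sub_distrib]
    congr 1
    · calc ∑ j, Sv j * ∑ β, (∑ k, pd k (fun z => pd k (u β) z) x) * pd j (u β) x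
          = ∑ j, ∑ β, (∑ k, pd k (fun z => pd k (u β) z) x) * (Sv j * pd j (u β) x) := by
            refine Finset.sum_congr rfl fun j _ => ?_
            rw [Finset.mul_sum]
            exact Finset.sum_congr rfl fun β _ => by ring
        _ = ∑ β, ∑ j, (∑ k, pd k (fun z => pd k (u β) z) x) * (Sv j * pd j (u β) x) :=
            Finset.sum_comm
        _ = ∑ β, (∑ k, pd k (fun z => pd k (u β) z) x) * (∑ j, Sv j * pd j (u β) x) := by
            exact Finset.sum_congr rfl fun β _ => by rw [← Finset.mul_sum]
    · exact Finset.sum_congr rfl fun j _ => (sq (Sv j)).symm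
  have hE2 : ∑ j, ((∑ β, ((∑ k, pd j (fun y => pd k (fun z => pd k (u β) z) y) x) * pd j (u β) x
          + (∑ k, pd k (fun z => pd k (u β) z) x) * pd j (fun z => pd j (u β) z) x))
        - ∑ β, ∑ k, (pd j (fun z => pd k (u β) z) x * pd j (fun z => pd k (u β) z) x
          + pd k (u β) x * pd j (fun y => pd j (fun z => pd k (u β) z) y) x))
      = (∑ β, (∑ k, pd k (fun z => pd k (u β) z) x)^2)
        - ∑ β, ∑ i, ∑ j, (pd i (fun y => pd j (u β) y) x)^2 := by
    rw [Finset.sum_sub_distrib]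
    have h1 : ∑ j, ∑ β, ((∑ k, pd j (fun y => pd k (fun z => pd k (u β) z) y) x) * pd j (u β) x
          + (∑ k, pd k (fun z => pd k (u β) z) x) * pd j (fun z => pd j (u β) z) x)
        = (∑ β, ∑ j, (∑ k, pd j (fun y => pd k (fun z => pd k (u β) z) y) x) * pd j (u β) x)
          + ∑ β, (∑ k, pd k (fun z => pd k (u β) z) x)^2 := by
      simp only [Finset.sum_add_distrib]
      rw [Finset.sum_comm]
      congr 1
      rw [Finset.sum_comm]
      refine Finset.sum_congr rfl fun β _ => ?_
      rw [← Finset.mul_sum, sq]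
    have h2 : ∑ j, ∑ β, ∑ k, (pd j (fun z => pd k (u β) z) x * pd j (fun z => pd k (u β) z) x
          + pd k (u β) x * pd j (fun y => pd j (fun z => pd k (u β) z) y) x)
        = (∑ β, ∑ i, ∑ j, (pd i (fun y => pd j (u β) y) x)^2)
          + ∑ β, ∑ j, ∑ k, pd k (u β) x * pd j (fun y => pd j (fun z => pd k (u β) z) y) x := by
      simp only [Finset.sum_add_distrib]
      rw [Finset.sum_comm]
      congr 1
      · refine Finset.sum_congr rfl fun β _ => Finset.sum_congr rfl fun i _ =>
          Finset.sum_congr rfl fun j _ => (sq _).symm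
      · exact Finset.sum_comm
    rw [h1, h2, Finset.sum_congr rfl fun β (_ : β ∈ Finset.univ) => hcancel β]
    ring
  -- ## sum the LHS
  have eL : (∑ j, pd j (fun y => gn y ^ (2*(p-2)) *
        ((∑ β, (∑ k, pd k (fun z => pd k (u β) z) y) * pd j (u β) y)
          - 1/2 * pd j G2 y)) x)
      = 2*(p-2) * (gn x ^ (p-2))^2 *
          ((∑ β, (∑ k, pd k (fun z => pd k (u β) z) x) * (∑ j, Sv j * pd j (u β) x))
            - ∑ j, (Sv j)^2) / gn x^2
        + (gn x ^ (p-2))^2 *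
          ((∑ β, (∑ k, pd k (fun z => pd k (u β) z) x)^2)
            - ∑ β, ∑ i, ∑ j, (pd i (fun y => pd j (u β) y) x)^2) := by
    rw [Finset.sum_congr rfl fun j (_ : j ∈ Finset.univ) => eLj j,
      Finset.sum_add_distrib, ← Finset.mul_sum, ← Finset.mul_sum, hSig, hE2,
      div_mul_eq_mul_div]
  -- ## RHS per-α
  have eRα : ∀ α, (∑ j, pd j (fun y => gn y ^ (p - 2) * pd j (u α) y) x)
      = (p-2) * gn x ^ (p-2) * (∑ j, Sv j * pd j (u α) x) / gn x^2
        + gn x ^ (p-2) * (∑ k, pd k (fun z => pd k (u α) z) x) := by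
    intro α
    rw [Finset.sum_congr rfl fun j (_ : j ∈ Finset.univ) => eRj α j,
      Finset.sum_add_distrib, ← Finset.sum_div, ← Finset.mul_sum, ← Finset.mul_sum]
  -- ## core inequality instance
  have hsymx : ∀ β j k, pd j (fun z => pd k (u β) z) x = pd k (fun z => pd j (u β) z) x :=
    fun β => hsymf β x hxΩ
  have hcore := core hp (fun β k => pd k (u β) x)
    (fun β j k => pd j (fun z => pd k (u β) z) x) hsymx (gn x^2) hg2sum (by positivity)
  beta_reduce at hcore
  simp only [← hSvv] at hcore
  -- ## conclude
  have eRsum : (∑ α, (∑ j, pd j (fun y => gn y ^ (p - 2) * pd j (u α) y) x)^2)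
      = ∑ α, ((p-2) * gn x ^ (p-2) * (∑ j, Sv j * pd j (u α) x) / gn x^2
          + gn x ^ (p-2) * (∑ k, pd k (fun z => pd k (u α) z) x))^2 :=
    Finset.sum_congr rfl fun α _ => by rw [eRα α]
  rw [eL, eQ, eRsum]
  exact final_scalar p (kappa N p) (gn x) (gn x ^ (p-2))
    (∑ β, ∑ i, ∑ j, (pd i (fun y => pd j (u β) y) x)^2) (∑ j, (Sv j)^2)
    (fun β => ∑ k, pd k (fun z => pd k (u β) z) x)
    (fun α => ∑ j, Sv j * pd j (u α) x) hgpos hcore
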